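/- If L ⊆ Σ* is the language recognised by a finite (string) automaton (Σ, Q, Q_f, q₀, δ), then the string tree language ⟨L⟩ = {⟨s⟩ | s ∈ L} is recognised by the NFSTA (Σ, Q ∪ Σ, Q_f, q₀, δ), where δ is extended so that δ(q₁, q₂) = ∅ for all q₁, q₂ ∈ Q. -/
import Mathlib


/-!  Common definitions: string trees over an alphabet (following
N. Schmidt, A. Patel, "Using Tree Automata and Regular Expressions to
Manipulate Hierarchically Structured Data").

Symbols: an ambient type `U` of "plain" symbols, extended with the two
angle brackets and the slash. -/

inductive TSym (U : Type) : Type where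
  | op : TSym U          -- ⟨
  | cl : TSym U          -- ⟩
  | slash : TSym U       -- /
  | ltr : U → TSym U     -- a plain symbol

namespace StringTree

variable {U V : Type}

/-- The letters of an alphabet `S ⊆ U`, viewed as (non-bracket) symbols. -/
def ltrs (S : Set U) : Set (TSym U) := {x | ∃ a ∈ S, x = TSym.ltr a}

/-- String trees over a set `S` of allowed non-bracket symbols:
`⟨⟩ ∈ T`, `⟨a⟩ ∈ T` for `a ∈ S`, closed under concatenation
`⟨x⟩·⟨y⟩ = ⟨xy⟩` and encapsulation `t ↦ ⟨t⟩`. -/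
inductive IsTree (S : Set (TSym U)) : List (TSym U) → Prop where
  | nil : IsTree S [TSym.op, TSym.cl]
  | single {x : TSym U} : x ∈ S → IsTree S [TSym.op, x, TSym.cl]
  | concat {x y : List (TSym U)} :
      IsTree S (TSym.op :: (x ++ [TSym.cl])) → IsTree S (TSym.op :: (y ++ [TSym.cl])) →
      IsTree S (TSym.op :: ((x ++ y) ++ [TSym.cl]))
  | encap {t : List (TSym U)} : IsTree S t → IsTree S (TSym.op :: (t ++ [TSym.cl]))

/-- `T(Σ)`, the set of string trees over the alphabet `Σ ⊆ U`. -/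
def TreeSet (S : Set U) : Set (List (TSym U)) := {t | IsTree (ltrs S) t}

/-- A plain string, viewed as a string of symbols. -/
def strOf (s : List U) : List (TSym U) := s.map TSym.ltr

/-- Move relation of a generalised non-deterministic finite string tree
automaton with initial states `Q0`, horizontal rules `Δ` and vertical
rules `γ`:
(a) `l⟨s⟩r ⇒ l⟨a/s⟩r` if `a ∈ Q0` (initial state assignment);
(b) `l⟨a/bs⟩r ⇒ l⟨c/s⟩r` if `(a,b) → c ∈ Δ` (horizontal move);
(c) `l⟨a/⟩r ⇒ lbr` if `b ∈ γ a` (vertical move). -/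
inductive GMove (Q0 : Set U) (Δ : Set (U × U × U)) (γ : U → Set U) :
    List (TSym U) → List (TSym U) → Prop where
  | init {l r : List (TSym U)} {s : List U} {a : U} :
      a ∈ Q0 →
      GMove Q0 Δ γ (l ++ [TSym.op] ++ strOf s ++ [TSym.cl] ++ r)
        (l ++ [TSym.op, TSym.ltr a, TSym.slash] ++ strOf s ++ [TSym.cl] ++ r)
  | horiz {l r : List (TSym U)} {s : List U} {a b c : U} :
      (a, b, c) ∈ Δ →
      GMove Q0 Δ γ (l ++ [TSym.op, TSym.ltr a, TSym.slash, TSym.ltr b] ++ strOf s ++ [TSym.cl] ++ r)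
        (l ++ [TSym.op, TSym.ltr c, TSym.slash] ++ strOf s ++ [TSym.cl] ++ r)
  | vert {l r : List (TSym U)} {a b : U} :
      b ∈ γ a →
      GMove Q0 Δ γ (l ++ [TSym.op, TSym.ltr a, TSym.slash, TSym.cl] ++ r)
        (l ++ [TSym.ltr b] ++ r)

/-- Move relation of an NFSTA: the GNFSTA moves with the single initial
state `q0` and with the vertical move `l⟨a/⟩r ⇒ lar`. -/
def NMove (q0 : U) (Δ : Set (U × U × U)) : List (TSym U) → List (TSym U) → Prop :=
  GMove {q0} Δ (fun a => {a})

/-- The final tree `⟨q/⟩`. -/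
def finalTree (q : U) : List (TSym U) := [TSym.op, TSym.ltr q, TSym.slash, TSym.cl]

/-- Acceptance by a GNFSTA: `t ⇒* ⟨q_f/⟩` for some `q_f ∈ Q_f`. -/
def GAccepts (Q0 : Set U) (Δ : Set (U × U × U)) (γ : U → Set U) (Qf : Set U)
    (t : List (TSym U)) : Prop :=
  ∃ qf ∈ Qf, Relation.ReflTransGen (GMove Q0 Δ γ) t (finalTree qf)

/-- The language of a GNFSTA: the set of trees of `T(Σ)` it accepts. -/
def GLang (Sa Q0 : Set U) (Δ : Set (U × U × U)) (γ : U → Set U) (Qf : Set U) :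
    Set (List (TSym U)) :=
  {t | t ∈ TreeSet Sa ∧ GAccepts Q0 Δ γ Qf t}

/-- Acceptance by an NFSTA. -/
def NAccepts (q0 : U) (Δ : Set (U × U × U)) (Qf : Set U) (t : List (TSym U)) : Prop :=
  GAccepts {q0} Δ (fun a => {a}) Qf t

/-- The language of an NFSTA. -/
def NLang (Sa : Set U) (q0 : U) (Δ : Set (U × U × U)) (Qf : Set U) : Set (List (TSym U)) :=
  GLang Sa {q0} Δ (fun a => {a}) Qf

/-- Well-formedness of a GNFSTA `(Σ, Q, Q_f, Q₀, Δ, γ)`: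
`Q` is finite, `Σ ⊆ Q`, `Q_f ⊆ Q`, `Q₀ ⊆ Q`, the rules of `Δ` are over `Q`,
and `γ` maps states of `Q` to sets of states of `Q`. -/
def GWF (Sa Q Qf Q0 : Set U) (Δ : Set (U × U × U)) (γ : U → Set U) : Prop :=
  Q.Finite ∧ Sa ⊆ Q ∧ Qf ⊆ Q ∧ Q0 ⊆ Q ∧
    (∀ p ∈ Δ, p.1 ∈ Q ∧ p.2.1 ∈ Q ∧ p.2.2 ∈ Q) ∧ (∀ q ∈ Q, γ q ⊆ Q)

/-- Well-formedness of an NFSTA `(Σ, Q, Q_f, q₀, Δ)`. -/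
def NWF (Sa Q Qf : Set U) (q0 : U) (Δ : Set (U × U × U)) : Prop :=
  Q.Finite ∧ Sa ⊆ Q ∧ Qf ⊆ Q ∧ q0 ∈ Q ∧ ∀ p ∈ Δ, p.1 ∈ Q ∧ p.2.1 ∈ Q ∧ p.2.2 ∈ Q

/-- A GNFSTA has pure states: no horizontal or vertical rule produces a
symbol of `Σ`, no horizontal rule has its state (first) component in `Σ`,
`γ(a) = ∅` for `a ∈ Σ`, and `Q₀ ∪ Q_f ⊆ Q ∖ Σ`. -/
def PureG (Sa Q Qf Q0 : Set U) (Δ : Set (U × U × U)) (γ : U → Set U) : Prop :=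
  (∀ p ∈ Δ, p.1 ∉ Sa ∧ p.2.2 ∉ Sa) ∧ (∀ a ∈ Sa, γ a = ∅) ∧
    (∀ q : U, ∀ p ∈ γ q, p ∉ Sa) ∧ Q0 ⊆ Q \ Sa ∧ Qf ⊆ Q \ Sa

/-- An NFSTA has pure states. -/
def PureN (Sa Q Qf : Set U) (q0 : U) (Δ : Set (U × U × U)) : Prop :=
  (∀ p ∈ Δ, p.1 ∉ Sa ∧ p.2.2 ∉ Sa) ∧ q0 ∈ Q \ Sa ∧ Qf ⊆ Q \ Sa


/-! Additional notions. -/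

/-- `⟨s₀ t₁ s₁ ⋯ tₙ sₙ⟩`: the string tree assembled from a head string `s₀`
and a list of pairs `(tᵢ, sᵢ)` of a subtree and a following string. -/
def flatRep (s0 : List U) (rest : List (List (TSym U) × List U)) : List (TSym U) :=
  TSym.op :: (strOf s0 ++ (rest.map (fun p => p.1 ++ strOf p.2)).flatten ++ [TSym.cl])

/-- The inner string of a tree `⟨x⟩`, i.e. `x`. -/
def innerStr (t : List (TSym U)) : List (TSym U) := (t.drop 1).dropLast

/-- Tree concatenation `⟨x⟩·⟨y⟩ = ⟨xy⟩`. -/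
def tconc (u v : List (TSym U)) : List (TSym U) :=
  TSym.op :: ((innerStr u ++ innerStr v) ++ [TSym.cl])

/-- The null tree `⟨⟩`. -/
def nilTree : List (TSym U) := [TSym.op, TSym.cl]

/-- `w` is a string over `Q ∪ {/}`. -/
def OverQSlash (Q : Set U) (w : List (TSym U)) : Prop :=
  ∀ x ∈ w, x = TSym.slash ∨ ∃ q ∈ Q, x = TSym.ltr q

/-- Renaming of symbols along a map of plain symbols. -/
def symRel (f : U → V) : TSym U → TSym V
  | TSym.op => TSym.op
  | TSym.cl => TSym.cl
  | TSym.slash => TSym.slash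
  | TSym.ltr a => TSym.ltr (f a)

/-- Renaming of the symbols of a tree along a map of plain symbols. -/
def treeRel (f : U → V) (t : List (TSym U)) : List (TSym V) := t.map (symRel f)

/-- The injective renaming `a ↦ {a}`. -/
def sing : U → Set U := fun a => {a}

/-- The vertical-rule function `γ` of a pure-state GNFSTA, extended by
`γ(a) = {a}` for `a ∈ Σ` and to sets by unions: `γ(b') = ⋃_{b ∈ b'} γ(b)`. -/
def gammaExt (Sa : Set U) (γ : U → Set U) (b' : Set U) : Set U :=
  {c | ∃ b ∈ b', c ∈ γ b ∨ (c = b ∧ b ∈ Sa)}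

/-- The transition function of the subset construction:
`Δ'(a', b') = {c | (a,b) → c ∈ Δ, a ∈ a', b ∈ γ(b')}`. -/
def subsetDelta (Sa : Set U) (γ : U → Set U) (Δ : Set (U × U × U)) (a' b' : Set U) : Set U :=
  {c | ∃ a ∈ a', ∃ b ∈ gammaExt Sa γ b', (a, b, c) ∈ Δ}

/-- The rule set of the subset-construction DFSTA, defined on pairs of
subsets of `Q`. -/
def subsetRules (Sa : Set U) (γ : U → Set U) (Δ : Set (U × U × U)) (Q : Set U) :
    Set (Set U × Set U × Set U) :=
  {x | x.1 ⊆ Q ∧ x.2.1 ⊆ Q ∧ x.2.2 = subsetDelta Sa γ Δ x.1 x.2.1}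

/-- A rule set is deterministic: at most one rule per left-hand side. -/
def Deterministic {α : Type} (Δ : Set (α × α × α)) : Prop :=
  ∀ a b c₁ c₂, (a, b, c₁) ∈ Δ → (a, b, c₂) ∈ Δ → c₁ = c₂

/-- `L` is recognised by some GNFSTA over the alphabet `Sa`. -/
def RecogG (Sa : Set U) (L : Set (List (TSym U))) : Prop :=
  ∃ Q Qf Q0 Δ γ, GWF Sa Q Qf Q0 Δ γ ∧ GLang Sa Q0 Δ γ Qf = L

/-- `L` is recognised by some NFSTA over the alphabet `Sa`. -/
def RecogN (Sa : Set U) (L : Set (List (TSym U))) : Prop :=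
  ∃ Q Qf q0 Δ, NWF Sa Q Qf q0 Δ ∧ NLang Sa q0 Δ Qf = L

/-- `L` is recognised, after the injective alphabet renaming `a ↦ {a}`,
by some deterministic FSTA. -/
def RecogD (Sa : Set U) (L : Set (List (TSym U))) : Prop :=
  ∃ (Q' Qf' : Set (Set U)) (q0' : Set U) (Δ' : Set (Set U × Set U × Set U)),
    NWF (sing '' Sa) Q' Qf' q0' Δ' ∧ Deterministic Δ' ∧
    NLang (sing '' Sa) q0' Δ' Qf' = treeRel sing '' L

/-- Runs of a classical finite (string) automaton with transition map `δ`. -/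
inductive FASteps (δ : U → U → Set U) : U → List U → U → Prop where
  | nil (q : U) : FASteps δ q [] q
  | cons {q a p s q'} : p ∈ δ q a → FASteps δ p s q' → FASteps δ q (a :: s) q'

/-- The language of a classical finite automaton `(Sa, Q, Q_f, q₀, δ)`. -/
def FALang (Sa : Set U) (δ : U → U → Set U) (q0 : U) (Qf : Set U) : Set (List U) :=
  {s | (∀ a ∈ s, a ∈ Sa) ∧ ∃ qf ∈ Qf, FASteps δ q0 s qf}

/-- `n`-fold composition of a relation: `relPow r n a b` iff `a ⇒ⁿ b`. -/
def relPow {α : Type} (r : α → α → Prop) : ℕ → α → α → Prop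
  | 0, a, b => a = b
  | n + 1, a, c => ∃ b, r a b ∧ relPow r n b c


/-! Ranked terms and classical tree automata. -/

/-- Unranked terms (rose trees) over a symbol type `F`. -/
inductive PreTerm (F : Type) : Type where
  | node : F → List (PreTerm F) → PreTerm F

/-- A term is well-ranked w.r.t. an arity function. -/
inductive WellRanked {F : Type} (ar : F → ℕ) : PreTerm F → Prop where
  | node {f : F} {ts : List (PreTerm F)} : ts.length = ar f →
      (∀ t ∈ ts, WellRanked ar t) → WellRanked ar (PreTerm.node f ts)

/-- The term-to-string-tree map `τ`:
`τ(f(t₁,…,t_p)) = ⟨f τ(t₁) ⋯ τ(t_p)⟩` (and `τ(a) = ⟨a⟩` for constants). -/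
def tau {F : Type} : PreTerm F → List (TSym F)
  | PreTerm.node f ts =>
      TSym.op :: TSym.ltr f :: ((ts.attach.map (fun x => tau x.1)).flatten ++ [TSym.cl])
  decreasing_by
    simp only [PreTerm.node.sizeOf_spec]
    have h := List.sizeOf_lt_of_mem x.2
    omega

/-- A term over the ranked alphabet given by symbols `Sa` and arities `ar`. -/
inductive GoodTerm (Sa : Set U) (ar : U → ℕ) : PreTerm U → Prop where
  | node {f : U} {ts : List (PreTerm U)} : f ∈ Sa → ts.length = ar f →
      (∀ t ∈ ts, GoodTerm Sa ar t) → GoodTerm Sa ar (PreTerm.node f ts)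

/-- Bottom-up runs of a classical tree automaton with rules
`f(q₁,…,qₙ) → q`: `CRun Δh t q` means the run assigns state `q` to `t`. -/
inductive CRun (Δh : Set (U × List U × U)) : PreTerm U → U → Prop where
  | node {f : U} {ts : List (PreTerm U)} {qs : List U} {q : U} :
      (f, qs, q) ∈ Δh → qs.length = ts.length →
      (∀ p ∈ ts.zip qs, CRun Δh p.1 p.2) →
      CRun Δh (PreTerm.node f ts) q

/-- The term language of a classical tree automaton. -/
def TermLang (Sa : Set U) (ar : U → ℕ) (Δh : Set (U × List U × U)) (Qhf : Set U) :
    Set (PreTerm U) :=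
  {t | GoodTerm Sa ar t ∧ ∃ q ∈ Qhf, CRun Δh t q}

/-! Vertical tree representation of strings. -/

def omegaRev : List U → List (TSym U)
  | [] => [TSym.op, TSym.cl]
  | a :: s => TSym.op :: (omegaRev s ++ [TSym.ltr a, TSym.cl])

/-- The vertical tree representation `ω(a₁⋯aₙ) = ⟨⟨⋯⟨⟩a₁⟩a₂⟩⋯aₙ⟩`,
defined by `ω(ε) = ⟨⟩` and `ω(sa) = ⟨ω(s)⟩·⟨a⟩`. -/
def omega (s : List U) : List (TSym U) := omegaRev s.reverse

/-! Regular string tree grammars. -/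

/-- A regular expression is over the symbol set `S`. -/
def REOver (S : Set U) : RegularExpression U → Prop
  | RegularExpression.zero => True
  | RegularExpression.epsilon => True
  | RegularExpression.char a => a ∈ S
  | RegularExpression.plus e₁ e₂ => REOver S e₁ ∧ REOver S e₂
  | RegularExpression.comp e₁ e₂ => REOver S e₁ ∧ REOver S e₂
  | RegularExpression.star e => REOver S e

/-- One derivation step of a regular string tree grammar with rule set `R`:
`lXr →_G l⟨x⟩r` whenever `X → ⟨e⟩ ∈ R` and `x ∈ ⟦e⟧`. -/
def GDeriv (R : Set (U × RegularExpression U)) (u v : List (TSym U)) : Prop :=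
  ∃ (l r : List (TSym U)) (X : U) (e : RegularExpression U) (x : List U),
    (X, e) ∈ R ∧ x ∈ e.matches' ∧
    u = l ++ [TSym.ltr X] ++ r ∧ v = l ++ (TSym.op :: (strOf x ++ [TSym.cl])) ++ r

/-- The language generated by a regular string tree grammar with axiom `S`:
all trees of `T(Σ)` derivable from `S`. -/
def GramLang (Sa : Set U) (S : U) (R : Set (U × RegularExpression U)) :
    Set (List (TSym U)) :=
  {t | t ∈ TreeSet Sa ∧ Relation.ReflTransGen (GDeriv R) [TSym.ltr S] t}

/-- Well-formedness of a regular string tree grammar `(Σ, N, S, R)`. -/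
def GramWF (Sa N : Set U) (S : U) (R : Set (U × RegularExpression U)) : Prop :=
  N.Finite ∧ Disjoint N Sa ∧ S ∈ N ∧ ∀ p ∈ R, p.1 ∈ N ∧ REOver (Sa ∪ N) p.2

/-! The map `Γ` and the instance relation `⊴` of the subset-construction
equivalence proof. -/

/-- `Γ` applies (the extension of) `γ` to every set-symbol that is not
immediately followed by a slash:
`Γ(ε)=ε`, `Γ(⟨s)=⟨Γ(s)`, `Γ(⟩s)=⟩Γ(s)`, `Γ(a/s)=a/Γ(s)`, `Γ(as)=γ(a)Γ(s)`. -/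
def GammaMap (g : Set U → Set U) : List (TSym (Set U)) → List (TSym (Set U))
  | [] => []
  | TSym.op :: s => TSym.op :: GammaMap g s
  | TSym.cl :: s => TSym.cl :: GammaMap g s
  | TSym.slash :: s => TSym.slash :: GammaMap g s
  | TSym.ltr a :: TSym.slash :: s => TSym.ltr a :: TSym.slash :: GammaMap g s
  | TSym.ltr a :: s => TSym.ltr (g a) :: GammaMap g s

/-- Symbol-wise instance relation: brackets and slashes match, and a plain
symbol is an element of the corresponding set-symbol. -/
inductive SymInst : TSym U → TSym (Set U) → Prop where
  | op : SymInst TSym.op TSym.op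
  | cl : SymInst TSym.cl TSym.cl
  | slash : SymInst TSym.slash TSym.slash
  | ltr {a : U} {A : Set U} : a ∈ A → SymInst (TSym.ltr a) (TSym.ltr A)

/-- `v ⊴ v'`: `v` is an instance of `v'`. -/
def Inst (v : List (TSym U)) (v' : List (TSym (Set U))) : Prop :=
  List.Forall₂ SymInst v v'

end StringTree

namespace StringTree

/-- The NFSTA rule set obtained from a classical FA transition map `δ`
(extended by `δ(q₁, q₂) = ∅` for pairs of states): `(q, a) → p` iff
`p ∈ δ(q, a)`. -/
def faRules {U : Type} (δ : U → U → Set U) : Set (U × U × U) :=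
  {p | p.2.2 ∈ δ p.1 p.2.1}

variable {U : Type}

/-- Parseable configurations with measure `n` = number of `op`s plus the
number of "dead" state letters. Tokens: `op`, `cl`, letters of `Sa`,
active blocks `⟨q/` with `q ∈ Q`, and dead letters `q ∈ Q \ Sa`. -/
inductive Conf (Sa Q : Set U) : ℕ → List (TSym U) → Prop where
  | nil : Conf Sa Q 0 []
  | op {n w} : Conf Sa Q n w → Conf Sa Q (n+1) (TSym.op :: w)
  | cl {n w} : Conf Sa Q n w → Conf Sa Q n (TSym.cl :: w)
  | ltr {n w a} : a ∈ Sa → Conf Sa Q n w → Conf Sa Q n (TSym.ltr a :: w)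
  | blk {n w q} : q ∈ Q → Conf Sa Q n w →
      Conf Sa Q (n+1) (TSym.op :: TSym.ltr q :: TSym.slash :: w)
  | dead {n w q} : q ∈ Q → q ∉ Sa → Conf Sa Q n w → Conf Sa Q (n+1) (TSym.ltr q :: w)

lemma conf_append {Sa Q : Set U} {m : ℕ} {x : List (TSym U)} (hx : Conf Sa Q m x) :
    ∀ {k : ℕ} {y : List (TSym U)}, Conf Sa Q k y → Conf Sa Q (m + k) (x ++ y) := by
  induction hx with
  | nil => intro k y hy; simpa using hy
  | op h ih => intro k y hy; rw [Nat.add_right_comm]; exact Conf.op (ih hy)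
  | cl h ih => intro k y hy; exact Conf.cl (ih hy)
  | ltr ha h ih => intro k y hy; exact Conf.ltr ha (ih hy)
  | blk hq h ih => intro k y hy; rw [Nat.add_right_comm]; exact Conf.blk hq (ih hy)
  | dead hq hna h ih => intro k y hy; rw [Nat.add_right_comm]; exact Conf.dead hq hna (ih hy)

lemma conf_split {Sa Q : Set U} {n : ℕ} {w : List (TSym U)} (h : Conf Sa Q n w) :
    ∀ x y, w = x ++ TSym.op :: y →
      ∃ m k, m + k = n ∧ Conf Sa Q m x ∧ Conf Sa Q k (TSym.op :: y) := by
  induction h with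
  | nil => intro x y hxy; exact absurd hxy (by simp)
  | op h ih =>
      intro x y hxy
      cases x with
      | nil =>
          simp only [List.nil_append, List.cons.injEq] at hxy
          obtain ⟨-, rfl⟩ := hxy
          exact ⟨0, _, by omega, Conf.nil, Conf.op h⟩
      | cons c x' =>
          simp only [List.cons_append, List.cons.injEq] at hxy
          obtain ⟨rfl, hxy⟩ := hxy
          obtain ⟨m, k, hmk, hx, hy⟩ := ih x' y hxy
          exact ⟨m + 1, k, by omega, Conf.op hx, hy⟩
  | cl h ih =>
      intro x y hxy
      cases x with
      | nil => simp at hxy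
      | cons c x' =>
          simp only [List.cons_append, List.cons.injEq] at hxy
          obtain ⟨rfl, hxy⟩ := hxy
          obtain ⟨m, k, hmk, hx, hy⟩ := ih x' y hxy
          exact ⟨m, k, hmk, Conf.cl hx, hy⟩
  | ltr ha h ih =>
      intro x y hxy
      cases x with
      | nil => simp at hxy
      | cons c x' =>
          simp only [List.cons_append, List.cons.injEq] at hxy
          obtain ⟨rfl, hxy⟩ := hxy
          obtain ⟨m, k, hmk, hx, hy⟩ := ih x' y hxy
          exact ⟨m, k, hmk, Conf.ltr ha hx, hy⟩
  | blk hq h ih =>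
      intro x y hxy
      match x, hxy with
      | [], hxy =>
          simp only [List.nil_append, List.cons.injEq] at hxy
          obtain ⟨-, rfl, rfl, rfl⟩ := hxy
          exact ⟨0, _, by omega, Conf.nil, Conf.blk hq h⟩
      | [c], hxy => simp at hxy
      | [c, d], hxy => simp at hxy
      | c :: d :: e :: x', hxy =>
          simp only [List.cons_append, List.cons.injEq] at hxy
          obtain ⟨rfl, rfl, rfl, hxy⟩ := hxy
          obtain ⟨m, k, hmk, hx, hy⟩ := ih x' y hxy
          exact ⟨m + 1, k, by omega, Conf.blk hq hx, hy⟩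
  | dead hq hna h ih =>
      intro x y hxy
      cases x with
      | nil => simp at hxy
      | cons c x' =>
          simp only [List.cons_append, List.cons.injEq] at hxy
          obtain ⟨rfl, hxy⟩ := hxy
          obtain ⟨m, k, hmk, hx, hy⟩ := ih x' y hxy
          exact ⟨m + 1, k, by omega, Conf.dead hq hna hx, hy⟩

lemma strOf_ne_block {s : List U} {r w : List (TSym U)} {q : U} :
    strOf s ++ TSym.cl :: r ≠ TSym.ltr q :: TSym.slash :: w := by
  match s with
  | [] => simp [strOf]
  | [a] => simp [strOf]
  | a :: b :: s' => simp [strOf]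

lemma conf_op_inv {Sa Q : Set U} {n : ℕ} {s : List U} {r : List (TSym U)}
    (h : Conf Sa Q n (TSym.op :: (strOf s ++ TSym.cl :: r))) :
    ∃ m, n = m + 1 ∧ Conf Sa Q m (strOf s ++ TSym.cl :: r) := by
  generalize hw : strOf s ++ TSym.cl :: r = w at h
  cases h with
  | op h => exact ⟨_, rfl, hw ▸ h⟩
  | blk hq h => exact absurd hw strOf_ne_block

lemma strOf_append_eq {s : List U} : ∀ {s' : List U} {r r' : List (TSym U)},
    strOf s ++ TSym.cl :: r = strOf s' ++ TSym.cl :: r' → s = s' ∧ r = r' := by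
  induction s with
  | nil =>
      intro s' r r' h
      cases s' with
      | nil => simpa [strOf] using h
      | cons a s' => simp [strOf] at h
  | cons a s ih =>
      intro s' r r' h
      cases s' with
      | nil => simp [strOf] at h
      | cons b s' =>
          simp only [strOf, List.map_cons, List.cons_append, List.cons.injEq,
            TSym.ltr.injEq] at h
          obtain ⟨rfl, h⟩ := h
          obtain ⟨rfl, rfl⟩ := ih h
          exact ⟨rfl, rfl⟩

section Moves

variable {Sa Q Qf : Set U} {q0 : U} {δ : U → U → Set U}

lemma conf_step (hq0 : q0 ∈ Q) (hδ : ∀ q a, δ q a ⊆ Q)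
    (hdom : ∀ q a, (δ q a).Nonempty → q ∈ Q ∧ a ∈ Sa) (hdisj : Disjoint Q Sa)
    {w w' : List (TSym U)} {n : ℕ}
    (hmv : NMove q0 (faRules δ) w w') (h : Conf Sa Q n w) : Conf Sa Q n w' := by
  cases hmv with
  | init ha =>
      rename_i l r s a
      have haq : a = q0 := ha
      have hw : l ++ [TSym.op] ++ strOf s ++ [TSym.cl] ++ r
          = l ++ TSym.op :: (strOf s ++ TSym.cl :: r) := by simp
      rw [hw] at h
      obtain ⟨m, k, hmk, hl, hop⟩ := conf_split h l _ rfl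
      obtain ⟨m', rfl, hin⟩ := conf_op_inv hop
      have haQ : a ∈ Q := by rw [haq]; exact hq0
      have hblk : Conf Sa Q (m' + 1) (TSym.op :: TSym.ltr a :: TSym.slash ::
          (strOf s ++ TSym.cl :: r)) := Conf.blk haQ hin
      have hres := conf_append hl hblk
      rw [hmk] at hres
      simpa using hres
  | horiz hrule =>
      rename_i l r s a b c
      have hbQ : c ∈ δ a b := hrule
      have hbSa : b ∈ Sa := (hdom a b ⟨c, hbQ⟩).2
      have hcQ : c ∈ Q := hδ a b hbQ
      have hw : l ++ [TSym.op, TSym.ltr a, TSym.slash, TSym.ltr b] ++ strOf s ++ [TSym.cl] ++ r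
          = l ++ TSym.op :: (TSym.ltr a :: TSym.slash :: TSym.ltr b ::
            (strOf s ++ TSym.cl :: r)) := by simp
      rw [hw] at h
      obtain ⟨m, k, hmk, hl, hop⟩ := conf_split h l _ rfl
      have hin : ∃ k', k = k' + 1 ∧ Conf Sa Q k' (strOf s ++ TSym.cl :: r) := by
        cases hop with
        | op h2 =>
            cases h2 with
            | ltr ha h3 => cases h3
            | dead hq hna h3 => cases h3
        | blk hq h2 =>
            cases h2 with
            | ltr hb h3 => exact ⟨_, rfl, h3⟩
            | dead hbQ' hbna h3 => exact absurd hbSa hbna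
      obtain ⟨k', rfl, hin⟩ := hin
      have hblk : Conf Sa Q (k' + 1) (TSym.op :: TSym.ltr c :: TSym.slash ::
          (strOf s ++ TSym.cl :: r)) := Conf.blk hcQ hin
      have hres := conf_append hl hblk
      rw [hmk] at hres
      simpa using hres
  | vert hb =>
      rename_i l r a b
      have hba : b = a := hb
      have hw : l ++ [TSym.op, TSym.ltr a, TSym.slash, TSym.cl] ++ r
          = l ++ TSym.op :: (TSym.ltr a :: TSym.slash :: TSym.cl :: r) := by simp
      rw [hw] at h
      obtain ⟨m, k, hmk, hl, hop⟩ := conf_split h l _ rfl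
      have hin : ∃ k', k = k' + 1 ∧ a ∈ Q ∧ Conf Sa Q k' r := by
        cases hop with
        | op h2 =>
            cases h2 with
            | ltr ha h3 => cases h3
            | dead hq hna h3 => cases h3
        | blk hq h2 =>
            cases h2 with
            | cl h3 => exact ⟨_, rfl, hq, h3⟩
      obtain ⟨k', rfl, haQ, hin⟩ := hin
      have hbQ : b ∈ Q := by rw [hba]; exact haQ
      have hbna : b ∉ Sa := fun hmem => Set.disjoint_left.mp hdisj hbQ hmem
      have hres := conf_append hl (Conf.dead hbQ hbna hin)
      rw [hmk] at hres
      simpa using hres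

lemma conf_steps (hq0 : q0 ∈ Q) (hδ : ∀ q a, δ q a ⊆ Q)
    (hdom : ∀ q a, (δ q a).Nonempty → q ∈ Q ∧ a ∈ Sa) (hdisj : Disjoint Q Sa)
    {w w' : List (TSym U)} {n : ℕ}
    (hmv : Relation.ReflTransGen (NMove q0 (faRules δ)) w w') (h : Conf Sa Q n w) :
    Conf Sa Q n w' := by
  induction hmv with
  | refl => exact h
  | tail _ hstep ih => exact conf_step hq0 hδ hdom hdisj hstep ih

lemma conf_final {n : ℕ} {q : U} (h : Conf Sa Q n (finalTree q)) : n = 1 := by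
  cases h with
  | op h2 =>
      cases h2 with
      | ltr ha h3 => cases h3
      | dead hq hna h3 => cases h3
  | blk hq h2 =>
      cases h2 with
      | cl h3 => cases h3; rfl

end Moves

/-- Number of `op` symbols in a configuration. -/
def opCount : List (TSym U) → ℕ
  | [] => 0
  | TSym.op :: w => opCount w + 1
  | TSym.cl :: w => opCount w
  | TSym.slash :: w => opCount w
  | TSym.ltr _ :: w => opCount w

@[simp] lemma opCount_nil : opCount ([] : List (TSym U)) = 0 := rfl
@[simp] lemma opCount_op {w : List (TSym U)} : opCount (TSym.op :: w) = opCount w + 1 := rfl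
@[simp] lemma opCount_cl {w : List (TSym U)} : opCount (TSym.cl :: w) = opCount w := rfl
@[simp] lemma opCount_slash {w : List (TSym U)} : opCount (TSym.slash :: w) = opCount w := rfl
@[simp] lemma opCount_ltr {a : U} {w : List (TSym U)} :
    opCount (TSym.ltr a :: w) = opCount w := rfl

@[simp] lemma opCount_append {x y : List (TSym U)} :
    opCount (x ++ y) = opCount x + opCount y := by
  induction x with
  | nil => simp
  | cons c x ih => cases c <;> simp [ih] <;> omega

@[simp] lemma opCount_strOf {s : List U} : opCount (strOf s) = 0 := by
  induction s with
  | nil => rfl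
  | cons a s ih => simpa [strOf] using ih

lemma tree_struct {Sa Q : Set U} {t : List (TSym U)} (h : IsTree (ltrs Sa) t) :
    ∃ u : List (TSym U), t = TSym.op :: (u ++ [TSym.cl]) ∧
      (∀ n r, Conf Sa Q n r → Conf Sa Q (n + opCount u) (u ++ r)) ∧
      (opCount u = 0 → ∃ s : List U, u = strOf s ∧ ∀ a ∈ s, a ∈ Sa) := by
  induction h with
  | nil =>
      exact ⟨[], rfl, fun n r hr => by simpa using hr,
        fun _ => ⟨[], rfl, by simp⟩⟩
  | single hx =>
      rename_i x
      obtain ⟨a, ha, rfl⟩ := hx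
      refine ⟨[TSym.ltr a], rfl, fun n r hr => by simpa using Conf.ltr ha hr,
        fun _ => ⟨[a], rfl, by simpa using ha⟩⟩
  | concat hx hy ihx ihy =>
      rename_i x y
      obtain ⟨u, hu, hcu, hfu⟩ := ihx
      obtain ⟨v, hv, hcv, hfv⟩ := ihy
      simp only [List.cons.injEq, true_and] at hu hv
      have hux : x = u := List.append_inj_left' hu rfl
      have hvy : y = v := List.append_inj_left' hv rfl
      subst hux hvy
      refine ⟨x ++ y, by simp, ?_, ?_⟩
      · intro n r hr
        have h1 := hcv n r hr
        have h2 := hcu _ _ h1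
        rw [List.append_assoc]
        have e : n + opCount (x ++ y) = n + opCount y + opCount x := by
          simp; omega
        rw [e]
        exact h2
      · intro hcnt
        simp only [opCount_append] at hcnt
        obtain ⟨s1, rfl, hs1⟩ := hfu (by omega)
        obtain ⟨s2, rfl, hs2⟩ := hfv (by omega)
        refine ⟨s1 ++ s2, by simp [strOf], ?_⟩
        intro a ha
        rcases List.mem_append.mp ha with h | h
        exacts [hs1 a h, hs2 a h]
  | encap ht ih =>
      rename_i t'
      obtain ⟨u, rfl, hcu, hfu⟩ := ih
      refine ⟨TSym.op :: (u ++ [TSym.cl]), rfl, ?_, ?_⟩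
      · intro n r hr
        have h2 := hcu _ _ (Conf.cl hr)
        have h3 := Conf.op h2
        have e1 : (TSym.op :: (u ++ [TSym.cl])) ++ r
            = TSym.op :: (u ++ TSym.cl :: r) := by simp
        have e2 : n + opCount (TSym.op :: (u ++ [TSym.cl])) = n + opCount u + 1 := by
          simp only [opCount_op, opCount_append, opCount_cl, opCount_nil]
          omega
        rw [e1, e2]
        exact h3
      · intro hcnt
        simp at hcnt

lemma flat_is_tree {Sa : Set U} : ∀ (s : List U), (∀ a ∈ s, a ∈ Sa) →
    IsTree (ltrs Sa) (TSym.op :: (strOf s ++ [TSym.cl])) := by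
  intro s
  induction s with
  | nil => intro _; exact IsTree.nil
  | cons a s ih =>
      intro hs
      have h1 : IsTree (ltrs Sa) (TSym.op :: ([TSym.ltr a] ++ [TSym.cl])) :=
        IsTree.single ⟨a, hs a (by simp), rfl⟩
      have h2 := ih fun b hb => hs b (by simp [hb])
      have h3 := IsTree.concat h1 h2
      simpa [strOf] using h3

section Accept

variable {Sa Q Qf : Set U} {q0 : U} {δ : U → U → Set U}

lemma fasteps_to_steps {q qf : U} {s : List U} (h : FASteps δ q s qf) :
    Relation.ReflTransGen (NMove q0 (faRules δ))
      ([TSym.op, TSym.ltr q, TSym.slash] ++ strOf s ++ [TSym.cl]) (finalTree qf) := by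
  induction h with
  | nil q =>
      have e : [TSym.op, TSym.ltr q, TSym.slash] ++ strOf ([] : List U) ++ [TSym.cl]
          = finalTree q := by simp [strOf, finalTree]
      rw [e]
  | cons hp hrest ih =>
      rename_i q a p s' qf'
      refine Relation.ReflTransGen.head ?_ ih
      have hmv := GMove.horiz (Q0 := ({q0} : Set U)) (γ := fun a => ({a} : Set U))
        (l := []) (r := []) (s := s') (a := q) (b := a) (c := p)
        (show (q, a, p) ∈ faRules δ from hp)
      simpa [strOf, NMove] using hmv

lemma op_notin_flat {s : List U} : TSym.op ∉ strOf s ++ [TSym.cl] := by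
  simp [strOf]

lemma move_from_flat {s : List U} {c : List (TSym U)}
    (h : NMove q0 (faRules δ) (TSym.op :: (strOf s ++ [TSym.cl])) c) :
    c = [TSym.op, TSym.ltr q0, TSym.slash] ++ strOf s ++ [TSym.cl] := by
  generalize hsrc : TSym.op :: (strOf s ++ [TSym.cl]) = w at h
  cases h with
  | init ha =>
      rename_i l r s' a
      have haq : a = q0 := ha
      cases l with
      | nil =>
          simp only [List.nil_append, List.append_assoc, List.singleton_append,
            List.cons_append, List.cons.injEq, true_and, and_true] at hsrc
          have h2 := hsrc
          obtain ⟨rfl, hr⟩ := strOf_append_eq (r := []) h2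
          rw [haq, ← hr]
          simp
      | cons d l' =>
          exfalso
          simp only [List.cons_append, List.append_assoc, List.singleton_append,
            List.nil_append, List.cons.injEq, true_and, and_true] at hsrc
          have h2 := hsrc
          have hmem : TSym.op ∈ strOf s ++ [TSym.cl] := by rw [h2.2]; simp
          exact op_notin_flat hmem
  | horiz hrule =>
      exfalso
      rename_i l r s' a b c'
      have hmem : TSym.slash ∈ TSym.op :: (strOf s ++ [TSym.cl]) := by
        rw [hsrc]; simp
      simp [strOf] at hmem
  | vert hb =>
      exfalso
      rename_i l r a b
      have hmem : TSym.slash ∈ TSym.op :: (strOf s ++ [TSym.cl]) := by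
        rw [hsrc]; simp
      simp [strOf] at hmem

lemma op_notin_state {q : U} {s : List U} :
    TSym.op ∉ TSym.ltr q :: TSym.slash :: (strOf s ++ [TSym.cl]) := by
  simp [strOf]

lemma move_from_state {q : U} {s : List U} {c : List (TSym U)}
    (h : NMove q0 (faRules δ) ([TSym.op, TSym.ltr q, TSym.slash] ++ strOf s ++ [TSym.cl]) c) :
    (∃ b s' p, s = b :: s' ∧ p ∈ δ q b ∧
        c = [TSym.op, TSym.ltr p, TSym.slash] ++ strOf s' ++ [TSym.cl]) ∨
    (s = [] ∧ c = [TSym.ltr q]) := by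
  generalize hsrc : [TSym.op, TSym.ltr q, TSym.slash] ++ strOf s ++ [TSym.cl] = w at h
  cases h with
  | init ha =>
      exfalso
      rename_i l r s' a
      cases l with
      | nil =>
          simp only [List.nil_append, List.append_assoc, List.singleton_append,
            List.cons_append, List.cons.injEq, true_and, and_true] at hsrc
          have h2 := hsrc
          exact strOf_ne_block h2.symm
      | cons d l' =>
          simp only [List.cons_append, List.append_assoc, List.singleton_append,
            List.nil_append, List.cons.injEq, true_and, and_true] at hsrc
          have h2 := hsrc
          have hmem : TSym.op ∈ TSym.ltr q :: TSym.slash :: (strOf s ++ [TSym.cl]) := by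
            rw [h2.2]; simp
          exact op_notin_state hmem
  | horiz hrule =>
      rename_i l r s' a b c'
      cases l with
      | nil =>
          simp only [List.nil_append, List.append_assoc, List.singleton_append,
            List.cons_append, List.cons.injEq, TSym.ltr.injEq, true_and, and_true] at hsrc
          obtain ⟨hqa, h2⟩ := hsrc
          cases s with
          | nil => simp [strOf] at h2
          | cons b2 s2 =>
              simp only [strOf, List.map_cons, List.cons_append, List.cons.injEq,
                TSym.ltr.injEq, true_and, and_true] at h2
              obtain ⟨hb2, h3⟩ := h2
              have h4 : strOf s2 ++ TSym.cl :: ([] : List (TSym U))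
                  = strOf s' ++ TSym.cl :: r := by simpa [strOf] using h3
              obtain ⟨rfl, hr⟩ := strOf_append_eq h4
              subst hqa hb2
              left
              exact ⟨b2, s2, c', rfl, hrule, by simp [← hr]⟩
      | cons d l' =>
          exfalso
          simp only [List.cons_append, List.append_assoc, List.singleton_append,
            List.nil_append, List.cons.injEq, true_and, and_true] at hsrc
          have h2 := hsrc
          have hmem : TSym.op ∈ TSym.ltr q :: TSym.slash :: (strOf s ++ [TSym.cl]) := by
            rw [h2.2]; simp
          exact op_notin_state hmem
  | vert hb =>
      rename_i l r a b
      have hba : b = a := hb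
      cases l with
      | nil =>
          simp only [List.nil_append, List.append_assoc, List.singleton_append,
            List.cons_append, List.cons.injEq, TSym.ltr.injEq, true_and, and_true] at hsrc
          obtain ⟨hqa, h2⟩ := hsrc
          cases s with
          | nil =>
              simp only [strOf, List.map_nil, List.nil_append, List.cons.injEq,
                true_and, and_true] at h2
              right
              refine ⟨rfl, ?_⟩
              rw [hba, ← hqa, ← h2]
              simp
          | cons b2 s2 => simp [strOf] at h2
      | cons d l' =>
          exfalso
          simp only [List.cons_append, List.append_assoc, List.singleton_append,
            List.nil_append, List.cons.injEq, true_and, and_true] at hsrc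
          have h2 := hsrc
          have hmem : TSym.op ∈ TSym.ltr q :: TSym.slash :: (strOf s ++ [TSym.cl]) := by
            rw [h2.2]; simp
          exact op_notin_state hmem

lemma no_move_from_letter {q qf : U}
    (h : Relation.ReflTransGen (NMove q0 (faRules δ)) [TSym.ltr q] (finalTree qf)) :
    False := by
  rcases Relation.ReflTransGen.cases_head h with heq | ⟨c, hstep, -⟩
  · simp [finalTree] at heq
  · generalize hsrc : ([TSym.ltr q] : List (TSym U)) = w at hstep
    cases hstep with
    | init ha =>
        have hmem : TSym.op ∈ ([TSym.ltr q] : List (TSym U)) := by rw [hsrc]; simp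
        simp at hmem
    | horiz hrule =>
        have hmem : TSym.op ∈ ([TSym.ltr q] : List (TSym U)) := by rw [hsrc]; simp
        simp at hmem
    | vert hb =>
        have hmem : TSym.op ∈ ([TSym.ltr q] : List (TSym U)) := by rw [hsrc]; simp
        simp at hmem

lemma steps_to_fasteps {qf : U} {w : List (TSym U)}
    (h : Relation.ReflTransGen (NMove q0 (faRules δ)) w (finalTree qf)) :
    ∀ (q : U) (s : List U),
      w = [TSym.op, TSym.ltr q, TSym.slash] ++ strOf s ++ [TSym.cl] →
      FASteps δ q s qf := by
  induction h using Relation.ReflTransGen.head_induction_on with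
  | refl =>
      intro q s hq
      cases s with
      | nil =>
          simp only [strOf, List.map_nil, finalTree, List.append_nil, List.cons_append,
            List.nil_append, List.cons.injEq, TSym.ltr.injEq, and_true, true_and] at hq
          rw [hq]
          exact FASteps.nil q
      | cons a s' => simp [strOf, finalTree] at hq
  | head hstep hrest ih =>
      intro q s hq
      subst hq
      rcases move_from_state hstep with ⟨b, s', p, rfl, hp, rfl⟩ | ⟨rfl, rfl⟩
      · exact FASteps.cons hp (ih p s' rfl)
      · exact (no_move_from_letter hrest).elim

lemma flat_accept {s : List U} {qf : U}
    (h : Relation.ReflTransGen (NMove q0 (faRules δ))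
      (TSym.op :: (strOf s ++ [TSym.cl])) (finalTree qf)) :
    FASteps δ q0 s qf := by
  rcases Relation.ReflTransGen.cases_head h with heq | ⟨c, hstep, hrest⟩
  · exfalso
    have hmem : TSym.slash ∈ TSym.op :: (strOf s ++ [TSym.cl]) := by
      rw [heq]; simp [finalTree]
    simp [strOf] at hmem
  · rw [move_from_flat hstep] at hrest
    exact steps_to_fasteps hrest q0 s rfl

end Accept

/-- If `L ⊆ Σ*` is the language recognised by a finite (string)
automaton `(Σ, Q, Q_f, q₀, δ)`, then the string tree language
`⟨L⟩ = {⟨s⟩ | s ∈ L}` is recognised by the NFSTA `(Σ, Q ∪ Σ, Q_f, q₀, δ)`,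
where `δ` is extended so that `δ(q₁, q₂) = ∅` for all `q₁, q₂ ∈ Q`. -/
theorem fa_to_fsta {U : Type} (Sa Q Qf : Set U) (q0 : U) (δ : U → U → Set U)
    (hSa : Sa.Finite) (hQ : Q.Finite) (hQf : Qf ⊆ Q) (hq0 : q0 ∈ Q)
    (hδ : ∀ q a, δ q a ⊆ Q)
    (hdom : ∀ q a, (δ q a).Nonempty → q ∈ Q ∧ a ∈ Sa)
    (hdisj : Disjoint Q Sa) :
    NLang Sa q0 (faRules δ) Qf
      = {t | ∃ s ∈ FALang Sa δ q0 Qf, t = TSym.op :: (strOf s ++ [TSym.cl])} := by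
  ext t
  simp only [NLang, GLang, Set.mem_setOf_eq]
  constructor
  · rintro ⟨htree, qf, hqf, hsteps⟩
    obtain ⟨u, rfl, hcu, hfu⟩ := tree_struct (Q := Q) htree
    have hconf : Conf Sa Q (0 + opCount u + 1) (TSym.op :: (u ++ [TSym.cl])) :=
      Conf.op (hcu 0 [TSym.cl] (Conf.cl Conf.nil))
    have hfin := conf_steps hq0 hδ hdom hdisj hsteps hconf
    have hone := conf_final hfin
    obtain ⟨s, rfl, hs⟩ := hfu (by omega)
    exact ⟨s, ⟨hs, qf, hqf, flat_accept hsteps⟩, rfl⟩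
  · rintro ⟨s, hsmem, rfl⟩
    obtain ⟨hs, qf, hqf, hfa⟩ := hsmem
    refine ⟨flat_is_tree s hs, qf, hqf, ?_⟩
    refine Relation.ReflTransGen.head ?_ (fasteps_to_steps hfa)
    have hmv := GMove.init (Q0 := ({q0} : Set U)) (Δ := faRules δ)
      (γ := fun a => ({a} : Set U)) (l := []) (r := []) (s := s) (a := q0) rfl
    simpa using hmv

end StringTree
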